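/- Let k be a field, p an odd prime, and t_1, ..., t_d distinct integers with 0 ≤ t_i ≤ p; let r_1 < r_2 < ... < r_d be the increasing enumeration of the set {t_1, ..., t_d}. Let A be a d×d upper triangular matrix over k[u] whose i-th diagonal entry is c_i·u^{t_i} with c_i ∈ k a nonzero constant, and whose (i,j)-entry x_{i,j} for i < j is a polynomial of degree strictly less than t_j. Suppose there exist matrices P and Q over k[[u]] such that: all entries of P lie in the subring k[[u^p]], P is invertible over k[[u]], Q is invertible over k[[u]], and A·P = Q·D where D is the diagonal matrix diag(u^{r_1}, ..., u^{r_d}). Then for all i < j: x_{i,j} = 0 if t_j < t_i, and x_{i,j} = y_{i,j}·u^{t_i} for some constant y_{i,j} ∈ k if t_j > t_i. -/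

import Mathlib

/-- matrix form of Proposition `shape` of the paper, at one embedding.
`A` is upper triangular over `k[u]` with `i`-th diagonal entry `c i * u ^ (t i)` and
off-diagonal degrees `< t j`; if `A · P = Q · diag(u^{r₁}, …, u^{r_d})` with `P` having
entries in `k[[u^p]]` and `P, Q` invertible over `k[[u]]`, then the off-diagonal entries
are as described. -/
theorem stmt1 {k : Type*} [Field k] {p d : ℕ} (hp : p.Prime) (hodd : Odd p)
    (t : Fin d → ℕ) (ht_inj : Function.Injective t) (ht_le : ∀ i, t i ≤ p)
    (r : Fin d → ℕ) (hr_mono : StrictMono r)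
    (hr_enum : ∃ σ : Equiv.Perm (Fin d), ∀ i, r i = t (σ i))
    (c : Fin d → k) (hc : ∀ i, c i ≠ 0)
    (A : Matrix (Fin d) (Fin d) (Polynomial k))
    (hA_lower : ∀ i j : Fin d, j < i → A i j = 0)
    (hA_diag : ∀ i : Fin d, A i i = Polynomial.C (c i) * Polynomial.X ^ (t i))
    (hA_deg : ∀ i j : Fin d, i < j → (A i j).degree < (t j : WithBot ℕ))
    (P Q : Matrix (Fin d) (Fin d) (PowerSeries k))
    (hPcoeff : ∀ i j : Fin d, ∀ n : ℕ, PowerSeries.coeff (R := k) n (P i j) ≠ 0 → p ∣ n)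
    (hP : IsUnit P.det) (hQ : IsUnit Q.det)
    (hfact : A.map (Polynomial.coeToPowerSeries.ringHom) * P
        = Q * Matrix.diagonal (fun i => (PowerSeries.X : PowerSeries k) ^ (r i))) :
    ∀ i j : Fin d, i < j →
      (t j < t i → A i j = 0) ∧
      (t i < t j → ∃ y : k, A i j = Polynomial.C y * Polynomial.X ^ (t i)) := by
  classical
  obtain ⟨σ, hσ⟩ := hr_enum
  set C : Matrix (Fin d) (Fin d) k := fun l j => PowerSeries.constantCoeff (R := k) (P l j) with hCdef
  -- coefficient of the product in degrees < p sees only the constant terms of P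
  have coeffAP : ∀ (i j : Fin d) (m : ℕ), m < p →
      PowerSeries.coeff (R := k) m ((A.map Polynomial.coeToPowerSeries.ringHom * P) i j)
        = ∑ l, (A i l).coeff m * C l j := by
    intro i j m hm
    rw [Matrix.mul_apply, map_sum]
    refine Finset.sum_congr rfl fun l _ => ?_
    rw [Matrix.map_apply, Polynomial.coeToPowerSeries.ringHom_apply, PowerSeries.coeff_mul]
    rw [Finset.sum_eq_single (m, 0)]
    · simp [hCdef, Polynomial.coeff_coe, PowerSeries.coeff_zero_eq_constantCoeff]
    · rintro ⟨m1, m2⟩ hmem hne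
      have hsum : m1 + m2 = m := Finset.HasAntidiagonal.mem_antidiagonal.mp hmem
      have h2 : m2 ≠ 0 := by
        rintro rfl
        exact hne (by simpa using hsum)
      have hz : PowerSeries.coeff (R := k) m2 (P l j) = 0 := by
        by_contra h
        have hd := hPcoeff l j m2 h
        have : p ≤ m2 := Nat.le_of_dvd (Nat.pos_of_ne_zero h2) hd
        omega
      simp [hz]
    · intro h
      exact absurd (Finset.HasAntidiagonal.mem_antidiagonal.mpr (by simp)) h
  -- coefficient of the right-hand side
  have coeffQD : ∀ (i j : Fin d) (m : ℕ),
      PowerSeries.coeff (R := k) m ((A.map Polynomial.coeToPowerSeries.ringHom * P) i j)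
        = if r j ≤ m then PowerSeries.coeff (R := k) (m - r j) (Q i j) else 0 := by
    intro i j m
    rw [hfact, Matrix.mul_diagonal]
    exact PowerSeries.coeff_mul_X_pow' (Q i j) (r j) m
  have detC : C.det ≠ 0 := by
    have h1 : IsUnit ((PowerSeries.constantCoeff (R := k)) P.det) :=
      hP.map (PowerSeries.constantCoeff (R := k))
    rw [RingHom.map_det] at h1
    exact h1.ne_zero
  -- Step B1 : right kernel of the relevant submatrix of C is trivial
  have B1 : ∀ n, n < p → ∀ w : Fin d → k, (∀ j, r j ≤ n → w j = 0) →
      (∀ l, n < t l → ∑ j, C l j * w j = 0) → w = 0 := by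
    intro n hn w hw0 hker
    set v : Fin d → k := fun l => ∑ j, C l j * w j with hvdef
    have hrel : ∀ (i : Fin d) (m : ℕ), m ≤ n → ∑ l, (A i l).coeff m * v l = 0 := by
      intro i m hm
      have hmp : m < p := lt_of_le_of_lt hm hn
      have swap : ∑ l, (A i l).coeff m * v l
          = ∑ j, (∑ l, (A i l).coeff m * C l j) * w j := by
        simp only [hvdef, Finset.mul_sum, Finset.sum_mul]
        rw [Finset.sum_comm]
        exact Finset.sum_congr rfl fun j _ => Finset.sum_congr rfl fun l _ => by ring
      rw [swap]
      refine Finset.sum_eq_zero fun j _ => ?_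
      rw [← coeffAP i j m hmp, coeffQD i j m]
      by_cases hrj : r j ≤ m
      · rw [hw0 j (le_trans hrj hm), mul_zero]
      · rw [if_neg hrj, zero_mul]
    have hv0 : v = 0 := by
      by_contra hvne
      have hex : ∃ l, v l ≠ 0 := by
        by_contra hno
        push_neg at hno
        exact hvne (funext hno)
      set S : Finset (Fin d) := Finset.univ.filter (fun l => v l ≠ 0) with hSdef
      have hSne : S.Nonempty := by
        obtain ⟨l, hl⟩ := hex
        exact ⟨l, by simp [hSdef, hl]⟩
      set l₀ : Fin d := S.max' hSne with hl₀def
      have hl₀S : l₀ ∈ S := S.max'_mem hSne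
      have hl₀ne : v l₀ ≠ 0 := by
        have := hl₀S
        simp [hSdef] at this
        exact this
      have hmax : ∀ l, l₀ < l → v l = 0 := by
        intro l hl
        by_contra hlne
        exact absurd (S.le_max' l (by simp [hSdef, hlne])) (not_le.mpr hl)
      have htl₀ : t l₀ ≤ n := by
        by_contra h
        exact hl₀ne (hker l₀ (not_le.mp h))
      have := hrel l₀ (t l₀) htl₀
      rw [Finset.sum_eq_single l₀] at this
      · have hco : (A l₀ l₀).coeff (t l₀) = c l₀ := by
          rw [hA_diag l₀]; simp
        rw [hco] at this
        exact hl₀ne ((mul_eq_zero.mp this).resolve_left (hc l₀))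
      · intro b _ hb
        rcases lt_or_gt_of_ne hb with h | h
        · rw [hA_lower l₀ b h, Polynomial.coeff_zero, zero_mul]
        · rw [hmax b h, mul_zero]
      · intro h
        exact absurd (Finset.mem_univ l₀) h
    by_contra hwne
    have : C.det = 0 := by
      rw [← Matrix.exists_mulVec_eq_zero_iff]
      refine ⟨w, hwne, ?_⟩
      funext l
      have : C.mulVec w l = v l := by
        simp [Matrix.mulVec, dotProduct, hvdef]
      rw [this, hv0]
    exact detC this
  -- Step B2 : left kernel statement
  have B2 : ∀ n, n < p → ∀ α : Fin d → k, (∀ l, t l ≤ n → α l = 0) →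
      (∀ j, n < r j → ∑ l, α l * C l j = 0) → α = 0 := by
    intro n hn α hα0 hαker
    set Ct : Matrix (Fin d) (Fin d) k :=
      fun l j => if n < t l ∧ n < r j then C l j else (if l = σ j then 1 else 0) with hCt
    have hdet : Ct.det ≠ 0 := by
      intro hdet0
      obtain ⟨w, hwne, hw⟩ := Matrix.exists_mulVec_eq_zero_iff.mpr hdet0
      have hw' : ∀ l, ∑ j, Ct l j * w j = 0 := by
        intro l
        have := congrFun hw l
        simpa [Matrix.mulVec, dotProduct] using this
      have hw0 : ∀ j, r j ≤ n → w j = 0 := by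
        intro j hrj
        have hrow := hw' (σ j)
        have htσ : ¬ n < t (σ j) := by rw [← hσ j]; omega
        have : ∑ j', Ct (σ j) j' * w j' = ∑ j', (if j' = j then w j' else 0) := by
          refine Finset.sum_congr rfl fun j' _ => ?_
          simp only [hCt]
          rw [if_neg (by tauto)]
          by_cases hj : j' = j
          · subst hj; simp
          · rw [if_neg (fun hh => hj (σ.injective hh.symm)), if_neg hj, zero_mul]
        rw [this, Finset.sum_ite_eq' Finset.univ j w] at hrow
        simpa using hrow
      have hker : ∀ l, n < t l → ∑ j, C l j * w j = 0 := by
        intro l hl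
        have hrow := hw' l
        have : ∑ j, Ct l j * w j = ∑ j, C l j * w j := by
          refine Finset.sum_congr rfl fun j _ => ?_
          by_cases hrj : n < r j
          · simp only [hCt]; rw [if_pos ⟨hl, hrj⟩]
          · rw [hw0 j (not_lt.mp hrj), mul_zero, mul_zero]
        rw [this] at hrow
        exact hrow
      exact hwne (B1 n hn w hw0 hker)
    have hvec : Matrix.vecMul α Ct = 0 := by
      funext j
      have hcol : Matrix.vecMul α Ct j = ∑ l, α l * Ct l j := by
        simp [Matrix.vecMul, dotProduct]
      rw [hcol]
      by_cases hrj : n < r j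
      · have : ∑ l, α l * Ct l j = ∑ l, α l * C l j := by
          refine Finset.sum_congr rfl fun l _ => ?_
          by_cases hl : n < t l
          · simp only [hCt]; rw [if_pos ⟨hl, hrj⟩]
          · rw [hα0 l (not_lt.mp hl), zero_mul, zero_mul]
        rw [this, hαker j hrj]
        rfl
      · have : ∑ l, α l * Ct l j = ∑ l, (if l = σ j then α l else 0) := by
          refine Finset.sum_congr rfl fun l _ => ?_
          simp only [hCt]
          rw [if_neg (by tauto)]
          by_cases hl : l = σ j
          · rw [if_pos hl, if_pos hl, mul_one]
          · rw [if_neg hl, if_neg hl, mul_zero]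
        rw [this, Finset.sum_ite_eq' Finset.univ (σ j) α]
        simp only [Finset.mem_univ, if_pos]
        have : t (σ j) ≤ n := by rw [← hσ j]; omega
        exact (hα0 _ this) ▸ rfl
    by_contra hαne
    have : Ct.det = 0 := Matrix.exists_vecMul_eq_zero_iff.mp ⟨α, hαne, hvec⟩
    exact hdet this
  -- Main coefficient vanishing
  have key : ∀ (i j : Fin d), ∀ m, m < t j → m ≠ t i → (A i j).coeff m = 0 := by
    intro i j m hm hne
    have hmp : m < p := lt_of_lt_of_le hm (ht_le j)
    set α : Fin d → k := fun l => (A i l).coeff m with hαdef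
    have hα0 : ∀ l, t l ≤ m → α l = 0 := by
      intro l hl
      rcases lt_trichotomy l i with h | h | h
      · simp [hαdef, hA_lower i l h]
      · subst h
        simp only [hαdef, hA_diag l, Polynomial.coeff_C_mul, Polynomial.coeff_X_pow]
        rw [if_neg hne, mul_zero]
      · refine Polynomial.coeff_eq_zero_of_degree_lt ?_
        exact lt_of_lt_of_le (hA_deg i l h) (by exact_mod_cast hl)
    have hαker : ∀ j', m < r j' → ∑ l, α l * C l j' = 0 := by
      intro j' hr
      have h1 := coeffAP i j' m hmp
      have h2 := coeffQD i j' m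
      rw [h1, if_neg (not_le.mpr hr)] at h2
      exact h2
    exact congrFun (B2 m hmp α hα0 hαker) j
  intro i j hij
  constructor
  · intro hlt
    ext m
    rw [Polynomial.coeff_zero]
    by_cases hm : m < t j
    · exact key i j m hm (by omega)
    · refine Polynomial.coeff_eq_zero_of_degree_lt ?_
      exact lt_of_lt_of_le (hA_deg i j hij) (by exact_mod_cast not_lt.mp hm)
  · intro hlt
    refine ⟨(A i j).coeff (t i), ?_⟩
    ext m
    rw [Polynomial.coeff_C_mul, Polynomial.coeff_X_pow]
    by_cases hme : m = t i
    · subst hme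
      rw [if_pos rfl, mul_one]
    · rw [if_neg hme, mul_zero]
      by_cases hm : m < t j
      · exact key i j m hm hme
      · refine Polynomial.coeff_eq_zero_of_degree_lt ?_
        exact lt_of_lt_of_le (hA_deg i j hij) (by exact_mod_cast not_lt.mp hm)
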